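/- Let X be a proper geodesic δ-hyperbolic space, let b ∈ 𝔅̂(X), suppose X is K-roughly starlike from the basepoint ω_b of b, and suppose ε > 0 is such that ρ_{ε,b} is a GH-density with constant M. Then there exists 0 < λ < 1 depending only on δ, K, ε, M such that for any x ∈ X and any y, z in the open ball of radius λ·d_{ε,b}(x) around x in the metric d_{ε,b} (where d_{ε,b}(x) denotes the distance from x to the metric boundary of X_{ε,b}), one has d(y,z) ≤ 1 and C⁻¹·d_{ε,b}(x)·d(y,z) ≤ d_{ε,b}(y,z) ≤ C·d_{ε,b}(x)·d(y,z), with C depending only on δ, K, ε, M. -/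

import Mathlib

open Metric Set Filter Topology
open scoped ENNReal Classical

noncomputable section

namespace Paper

variable {X Y : Type*}

/-- The distance function of a metric space. -/
def distFun (X : Type*) [MetricSpace X] : X → X → ℝ := fun p q => dist p q

/-- `e` is a genuine metric distance function. -/
def IsMetricDist (e : X → X → ℝ) : Prop :=
  (∀ x, e x x = 0) ∧ (∀ x y, x ≠ y → 0 < e x y) ∧ (∀ x y, e x y = e y x) ∧
    ∀ x y z, e x z ≤ e x y + e y z

/-- Cauchy sequence with respect to the distance function `e`. -/
def CauchyWrt (e : X → X → ℝ) (u : ℕ → X) : Prop :=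
  ∀ δ : ℝ, 0 < δ → ∃ N : ℕ, ∀ m, N ≤ m → ∀ n, N ≤ n → e (u m) (u n) < δ

/-- The sequence converges, w.r.t. `e`, to a point of the space. -/
def ConvWrt (e : X → X → ℝ) (u : ℕ → X) : Prop :=
  ∃ y : X, Tendsto (fun n => e (u n) y) atTop (𝓝 0)

/-- The space is incomplete with respect to `e`:
some Cauchy sequence does not converge in the space. -/
def IncompleteWrt (e : X → X → ℝ) : Prop :=
  ∃ u : ℕ → X, CauchyWrt e u ∧ ¬ ConvWrt e u

/-- Distance from `x` to the metric boundary (the completion minus the space),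
measured w.r.t. `e`: the infimum of the limits `lim_n e x (u n)` over all Cauchy
sequences `u` that have no limit in the space. -/
def bdryDistWrt (e : X → X → ℝ) (x : X) : ℝ :=
  sInf { r : ℝ | ∃ u : ℕ → X, CauchyWrt e u ∧ ¬ ConvWrt e u ∧
    Tendsto (fun n => e x (u n)) atTop (𝓝 r) }

/-- Sequential compactness of a set w.r.t. `e`. -/
def SeqCompactWrt (e : X → X → ℝ) (s : Set X) : Prop :=
  ∀ u : ℕ → X, (∀ n, u n ∈ s) → ∃ y ∈ s, ∃ φ : ℕ → ℕ, StrictMono φ ∧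
    Tendsto (fun n => e (u (φ n)) y) atTop (𝓝 0)

/-- Local compactness w.r.t. `e`: every point has arbitrarily small compact closed balls. -/
def LocallyCompactWrt (e : X → X → ℝ) : Prop :=
  ∀ x : X, ∀ r : ℝ, 0 < r → ∃ r' : ℝ, 0 < r' ∧ r' ≤ r ∧ SeqCompactWrt e { y | e x y ≤ r' }

/-- Continuity of a curve on a set of parameters, w.r.t. `e`. -/
def ContinuousOnWrt (e : X → X → ℝ) (γ : ℝ → X) (I : Set ℝ) : Prop :=
  ∀ t ∈ I, ∀ δ : ℝ, 0 < δ → ∃ η : ℝ, 0 < η ∧ ∀ s ∈ I, |s - t| < η → e (γ s) (γ t) < δ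

/-- The length (total variation) of the curve `γ` on the parameter set `I`, w.r.t. `e`. -/
def varOn (e : X → X → ℝ) (γ : ℝ → X) (I : Set ℝ) : ℝ≥0∞ :=
  ⨆ p : ℕ × { u : ℕ → ℝ // Monotone u ∧ ∀ i, u i ∈ I },
    ∑ i ∈ Finset.range p.1, ENNReal.ofReal (e (γ (p.2.1 (i + 1))) (γ (p.2.1 i)))

/-- `X` with distance `e` is an `A`-uniform metric space: it is a locally compact,
incomplete metric space any two of whose points are joined by an `A`-uniform curve. -/
def IsUniformSpcWrt (e : X → X → ℝ) (A : ℝ) : Prop :=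
  IsMetricDist e ∧ LocallyCompactWrt e ∧ IncompleteWrt e ∧
  ∀ x y : X, ∃ (a b : ℝ) (γ : ℝ → X), a ≤ b ∧ ContinuousOnWrt e γ (Icc a b) ∧
    γ a = x ∧ γ b = y ∧
    varOn e γ (Icc a b) ≤ ENNReal.ofReal (A * e x y) ∧
    ∀ t ∈ Icc a b, min (varOn e γ (Icc a t)) (varOn e γ (Icc t b)) ≤
      ENNReal.ofReal (A * bdryDistWrt e (γ t))

/-- `f` is `∂`-Lipschitz with data `(L, lam)`. -/
def PartialLipschitzWrt (e : X → X → ℝ) (e' : Y → Y → ℝ) (L lam : ℝ) (f : X → Y) : Prop :=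
  ∀ x y z : X, e y x < lam * bdryDistWrt e x → e z x < lam * bdryDistWrt e x →
    e' (f y) (f z) / bdryDistWrt e' (f x) ≤ L * (e y z / bdryDistWrt e x)

/-- `f` (with inverse `g`) is `∂`-biLipschitz with data `(L, lam)`. -/
def PartialBiLipschitzWrt (e : X → X → ℝ) (e' : Y → Y → ℝ) (L lam : ℝ)
    (f : X → Y) (g : Y → X) : Prop :=
  1 ≤ L ∧ Function.LeftInverse g f ∧ Function.RightInverse g f ∧
    PartialLipschitzWrt e e' L lam f ∧ PartialLipschitzWrt e' e L lam g

/-- Cross-ratio of a quadruple of points, w.r.t. `e`. -/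
def crossRatioWrt (e : X → X → ℝ) (x y z w : X) : ℝ := e x z * e y w / (e x y * e z w)

/-- `f` is `η`-quasimöbius. -/
def QuasiMobiusWrt (e : X → X → ℝ) (e' : Y → Y → ℝ) (η : ℝ → ℝ) (f : X → Y) : Prop :=
  ∀ x y z w : X, x ≠ y → x ≠ z → x ≠ w → y ≠ z → y ≠ w → z ≠ w →
    crossRatioWrt e' (f x) (f y) (f z) (f w) ≤ η (crossRatioWrt e x y z w)

/-- `f` is `η`-quasisymmetric. -/
def QuasiSymmetricWrt (e : X → X → ℝ) (e' : Y → Y → ℝ) (η : ℝ → ℝ) (f : X → Y) : Prop :=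
  ∀ x y z : X, ∀ t : ℝ, 0 ≤ t → e x y ≤ t * e x z → e' (f x) (f y) ≤ η t * e' (f x) (f z)

/-- `η` is (the restriction to `[0,∞)` of) a self-homeomorphism of `[0,∞)`:
continuous, strictly increasing, fixing `0`, and tending to `∞`. -/
def IsControlFun (η : ℝ → ℝ) : Prop :=
  ContinuousOn η (Ici 0) ∧ StrictMonoOn η (Ici 0) ∧ η 0 = 0 ∧ Tendsto η atTop atTop

/-- The conformal deformation distance with conformal factor `ρ`: the infimum of
`∫ ρ ∘ γ` over all `1`-Lipschitz (w.r.t. `e`) curves joining `x` to `y`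
(equivalently, the infimum of `∫_γ ρ ds` over all rectifiable curves joining `x` to `y`). -/
def confDistWrt (e : X → X → ℝ) (ρ : X → ℝ) (x y : X) : ℝ :=
  sInf { l : ℝ | ∃ (T : ℝ) (γ : ℝ → X), 0 ≤ T ∧
    (∀ s ∈ Icc 0 T, ∀ t ∈ Icc 0 T, e (γ s) (γ t) ≤ |s - t|) ∧
    γ 0 = x ∧ γ T = y ∧ l = ∫ t in (0:ℝ)..T, ρ (γ t) }

/-- The quasihyperbolic metric of the space with distance `e`. -/
def quasiHypWrt (e : X → X → ℝ) : X → X → ℝ :=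
  confDistWrt e fun z => (bdryDistWrt e z)⁻¹

/-- `γ` is a geodesic segment from `x` to `y`, parametrized by arclength on `[0, e x y]`. -/
def IsGeodesicSegWrt (e : X → X → ℝ) (γ : ℝ → X) (x y : X) : Prop :=
  γ 0 = x ∧ γ (e x y) = y ∧
    ∀ s ∈ Icc 0 (e x y), ∀ t ∈ Icc 0 (e x y), e (γ s) (γ t) = |s - t|

/-- Any two points are joined by a geodesic. -/
def GeodesicSpaceWrt (e : X → X → ℝ) : Prop := ∀ x y : X, ∃ γ : ℝ → X, IsGeodesicSegWrt e γ x y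

/-- The image of a geodesic segment. -/
def segImageWrt (e : X → X → ℝ) (γ : ℝ → X) (x y : X) : Set X := γ '' Icc 0 (e x y)

/-- `δ`-hyperbolicity: every geodesic triangle is `δ`-thin. -/
def DeltaHyperbolicWrt (e : X → X → ℝ) (δ : ℝ) : Prop :=
  ∀ (x y z : X) (γ₁ γ₂ γ₃ : ℝ → X),
    IsGeodesicSegWrt e γ₁ x y → IsGeodesicSegWrt e γ₂ y z → IsGeodesicSegWrt e γ₃ z x →
    (∀ p ∈ segImageWrt e γ₁ x y, ∃ q ∈ segImageWrt e γ₂ y z ∪ segImageWrt e γ₃ z x, e p q ≤ δ) ∧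
    (∀ p ∈ segImageWrt e γ₂ y z, ∃ q ∈ segImageWrt e γ₁ x y ∪ segImageWrt e γ₃ z x, e p q ≤ δ) ∧
    (∀ p ∈ segImageWrt e γ₃ z x, ∃ q ∈ segImageWrt e γ₁ x y ∪ segImageWrt e γ₂ y z, e p q ≤ δ)

/-- `γ` is a geodesic ray (defined on `[0,∞)`). -/
def IsGeodesicRayWrt (e : X → X → ℝ) (γ : ℝ → X) : Prop :=
  ∀ s ∈ Ici (0:ℝ), ∀ t ∈ Ici (0:ℝ), e (γ s) (γ t) = |s - t|

/-- `γ` is a geodesic line. -/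
def IsGeodesicLineWrt (e : X → X → ℝ) (γ : ℝ → X) : Prop :=
  ∀ s t : ℝ, e (γ s) (γ t) = |s - t|

/-- Two rays are at bounded distance from each other (represent the same
point of the Gromov boundary). -/
def RayEquivWrt (e : X → X → ℝ) (γ σ : ℝ → X) : Prop :=
  ∃ c : ℝ, ∀ t ∈ Ici (0:ℝ), e (γ t) (σ t) ≤ c

/-- The infimal distance from `x` to the set `s`, w.r.t. `e`. -/
def infDistWrt (e : X → X → ℝ) (x : X) (s : Set X) : ℝ := sInf (e x '' s)

/-- `X` is `K`-roughly starlike from the point `z`. -/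
def RoughStarlikeFromPointWrt (e : X → X → ℝ) (K : ℝ) (z : X) : Prop :=
  ∀ x : X, ∃ γ : ℝ → X, IsGeodesicRayWrt e γ ∧ γ 0 = z ∧ infDistWrt e x (γ '' Ici 0) ≤ K

/-- `X` is `K`-roughly starlike from the Gromov boundary point represented by the
geodesic ray `ρ`: every point lies within distance `K` of a geodesic line starting
from that boundary point. -/
def RoughStarlikeFromRayWrt (e : X → X → ℝ) (K : ℝ) (ρ : ℝ → X) : Prop :=
  ∀ x : X, ∃ γ : ℝ → X, IsGeodesicLineWrt e γ ∧ RayEquivWrt e (fun t => γ (-t)) ρ ∧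
    infDistWrt e x (range γ) ≤ K

/-- The Busemann function of the geodesic ray `ρ`:
`b_ρ(x) = lim_{t→∞} (e (ρ t) x - t) = inf_{t ≥ 0} (e (ρ t) x - t)`. -/
def busemannWrt (e : X → X → ℝ) (ρ : ℝ → X) (x : X) : ℝ :=
  sInf ((fun t => e (ρ t) x - t) '' Ici 0)

/-- `b ∈ 𝔅̂(X)` (either a translated distance function or a translated Busemann
function), and `X` is `K`-roughly starlike from the basepoint of `b`. -/
def BhatStarlike (e : X → X → ℝ) (K : ℝ) (b : X → ℝ) : Prop :=
  (∃ (z : X) (s : ℝ), (∀ x, b x = e x z + s) ∧ RoughStarlikeFromPointWrt e K z) ∨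
  (∃ (ρ : ℝ → X) (s : ℝ), IsGeodesicRayWrt e ρ ∧ (∀ x, b x = busemannWrt e ρ x + s) ∧
    RoughStarlikeFromRayWrt e K ρ)

/-- `ρ` is a Gehring–Hayman density with constant `M`: the `ρ`-length of any geodesic
is at most `M` times the conformal distance between its endpoints. -/
def IsGHDensityWrt (e : X → X → ℝ) (M : ℝ) (ρ : X → ℝ) : Prop :=
  ∀ (x y : X) (γ : ℝ → X), IsGeodesicSegWrt e γ x y →
    (∫ t in (0:ℝ)..(e x y), ρ (γ t)) ≤ M * confDistWrt e ρ x y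

/-- The density `ρ_{ε,b}(x) = e^{-ε b(x)}`. -/
def uniformizationDensity (b : X → ℝ) (ε : ℝ) : X → ℝ := fun x => Real.exp (-ε * b x)

/-- The Gromov product of `x` and `y` based at `z`. -/
def gromovProdWrt (e : X → X → ℝ) (z x y : X) : ℝ := (e x z + e y z - e x y) / 2

/-- The sequence `u` represents the Gromov boundary point of the geodesic ray `ρ`
(with respect to the basepoint `z`). -/
def SeqRepWrt (e : X → X → ℝ) (z : X) (ρ : ℝ → X) (u : ℕ → X) : Prop :=
  Tendsto (fun n => gromovProdWrt e z (u n) (ρ n)) atTop atTop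

/-- The Gromov product, based at `z`, of the two boundary points represented by the
geodesic rays `ρ` and `σ` (valued in `[0,∞]`). -/
def bGromovProdWrt (e : X → X → ℝ) (z : X) (ρ σ : ℝ → X) : ℝ≥0∞ :=
  ⨅ (u : { u : ℕ → X // SeqRepWrt e z ρ u }) (v : { v : ℕ → X // SeqRepWrt e z σ v }),
    Filter.liminf (fun n => ENNReal.ofReal (gromovProdWrt e z (u.1 n) (v.1 n))) atTop

/-- `S(x) = sup_{ω ∈ ∂X} inf_{ξ ∈ ∂X} (ω|ξ)_x`. -/
def Sfun (e : X → X → ℝ) (x : X) : ℝ≥0∞ :=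
  ⨆ (ω : { ρ : ℝ → X // IsGeodesicRayWrt e ρ }),
    ⨅ (ξ : { ρ : ℝ → X // IsGeodesicRayWrt e ρ }), bGromovProdWrt e x ω.1 ξ.1

/-- The filter at the left end of the interval `I`. -/
def leftEndFilter (I : Set ℝ) : Filter ℝ :=
  if BddBelow I then 𝓝[I] (sInf I) else atBot ⊓ 𝓟 I

/-- The filter at the right end of the interval `I`. -/
def rightEndFilter (I : Set ℝ) : Filter ℝ :=
  if BddAbove I then 𝓝[I] (sSup I) else atTop ⊓ 𝓟 I

/-- `γ : I → Ω` is an `A`-uniform curve: it is rectifiable with endpoints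
`γ₋, γ₊` in the completion `Ω̄` satisfying `ℓ(γ) ≤ A d(γ₋,γ₊)` (or non-rectifiable with
`d(γ(s),γ(t)) → ∞` towards the endpoints of `I`), and at every time `t` the shorter of
the two subcurves has length at most `A d_Ω(γ(t))`. -/
def IsUniformCurve {Ω : Type*} [MetricSpace Ω] (A : ℝ) (γ : ℝ → Ω) (I : Set ℝ) : Prop :=
  I.Nonempty ∧ I.OrdConnected ∧ ContinuousOn γ I ∧
  ((varOn (distFun Ω) γ I ≠ ⊤ ∧
     ∃ gm gp : UniformSpace.Completion Ω,
       Tendsto (fun t => (γ t : UniformSpace.Completion Ω)) (leftEndFilter I) (𝓝 gm) ∧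
       Tendsto (fun t => (γ t : UniformSpace.Completion Ω)) (rightEndFilter I) (𝓝 gp) ∧
       varOn (distFun Ω) γ I ≤ ENNReal.ofReal (A * dist gm gp)) ∨
   (varOn (distFun Ω) γ I = ⊤ ∧
     Tendsto (fun pq : ℝ × ℝ => dist (γ pq.1) (γ pq.2))
       (leftEndFilter I ×ˢ rightEndFilter I) atTop)) ∧
  ∀ t ∈ I, min (varOn (distFun Ω) γ (I ∩ Iic t)) (varOn (distFun Ω) γ (I ∩ Ici t)) ≤
    ENNReal.ofReal (A * bdryDistWrt (distFun Ω) (γ t))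

/-! ### Auxiliary development -/

section Aux

variable {X : Type*} [MetricSpace X]

@[simp] lemma distFun_eq (p q : X) : distFun X p q = dist p q := rfl

/-- The set whose infimum defines `confDistWrt`. -/
def confSet (ρ : X → ℝ) (x y : X) : Set ℝ :=
  { l : ℝ | ∃ (T : ℝ) (γ : ℝ → X), 0 ≤ T ∧
    (∀ s ∈ Icc 0 T, ∀ t ∈ Icc 0 T, dist (γ s) (γ t) ≤ |s - t|) ∧
    γ 0 = x ∧ γ T = y ∧ l = ∫ t in (0:ℝ)..T, ρ (γ t) }

lemma confDist_eq_sInf (ρ : X → ℝ) (x y : X) :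
    confDistWrt (distFun X) ρ x y = sInf (confSet ρ x y) := rfl

variable {ρ : X → ℝ}

lemma confSet_nonneg (hρ : ∀ p, 0 ≤ ρ p) {x y : X} :
    ∀ l ∈ confSet ρ x y, (0:ℝ) ≤ l := by
  rintro l ⟨T, γ, hT, -, -, -, rfl⟩
  exact intervalIntegral.integral_nonneg hT fun t _ => hρ _

lemma confSet_bddBelow (hρ : ∀ p, 0 ≤ ρ p) {x y : X} : BddBelow (confSet ρ x y) :=
  ⟨0, fun l hl => confSet_nonneg hρ l hl⟩

lemma conf_nonneg (hρ : ∀ p, 0 ≤ ρ p) (x y : X) :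
    0 ≤ confDistWrt (distFun X) ρ x y :=
  Real.sInf_nonneg (confSet_nonneg hρ)

lemma curve_mem (x y : X) {T : ℝ} {γ : ℝ → X} (hT : 0 ≤ T)
    (hlip : ∀ s ∈ Icc 0 T, ∀ t ∈ Icc 0 T, dist (γ s) (γ t) ≤ |s - t|)
    (h0 : γ 0 = x) (h1 : γ T = y) :
    (∫ t in (0:ℝ)..T, ρ (γ t)) ∈ confSet ρ x y :=
  ⟨T, γ, hT, hlip, h0, h1, rfl⟩

lemma conf_le_curve (x y : X) {T : ℝ} {γ : ℝ → X} (hρ : ∀ p, 0 ≤ ρ p) (hT : 0 ≤ T)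
    (hlip : ∀ s ∈ Icc 0 T, ∀ t ∈ Icc 0 T, dist (γ s) (γ t) ≤ |s - t|)
    (h0 : γ 0 = x) (h1 : γ T = y) :
    confDistWrt (distFun X) ρ x y ≤ ∫ t in (0:ℝ)..T, ρ (γ t) :=
  csInf_le (confSet_bddBelow hρ) (curve_mem x y hT hlip h0 h1)

lemma geodesic_exists (hg : GeodesicSpaceWrt (distFun X)) (x y : X) :
    ∃ γ : ℝ → X, γ 0 = x ∧ γ (dist x y) = y ∧
      ∀ s ∈ Icc 0 (dist x y), ∀ t ∈ Icc 0 (dist x y), dist (γ s) (γ t) = |s - t| := by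
  obtain ⟨γ, h0, h1, h2⟩ := hg x y
  exact ⟨γ, h0, h1, h2⟩

lemma curve_contOn {T : ℝ} {γ : ℝ → X}
    (hlip : ∀ s ∈ Icc 0 T, ∀ t ∈ Icc 0 T, dist (γ s) (γ t) ≤ |s - t|) :
    ContinuousOn γ (Icc 0 T) := by
  have : LipschitzOnWith 1 γ (Icc 0 T) := by
    apply LipschitzOnWith.of_dist_le_mul
    intro a ha b hb
    simpa [Real.dist_eq] using hlip a ha b hb
  exact this.continuousOn

lemma confSet_nonempty (hg : GeodesicSpaceWrt (distFun X)) (x y : X) :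
    (confSet ρ x y).Nonempty := by
  obtain ⟨γ, h0, h1, h2⟩ := geodesic_exists hg x y
  exact ⟨_, curve_mem x y dist_nonneg
    (fun s hs t ht => le_of_eq (h2 s hs t ht)) h0 h1⟩

end Aux
section Aux2

variable {X : Type*} [MetricSpace X] {ρ : X → ℝ} {ε : ℝ}

lemma confSet_symm_subset (x y : X) : confSet ρ x y ⊆ confSet ρ y x := by
  rintro l ⟨T, γ, hT, hlip, h0, h1, rfl⟩
  refine ⟨T, fun t => γ (T - t), hT, ?_, by simp [h1], by simp [h0], ?_⟩
  · intro s hs t ht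
    have hs' : T - s ∈ Icc 0 T := ⟨by linarith [hs.2], by linarith [hs.1]⟩
    have ht' : T - t ∈ Icc 0 T := ⟨by linarith [ht.2], by linarith [ht.1]⟩
    calc dist (γ (T - s)) (γ (T - t)) ≤ |(T - s) - (T - t)| := hlip _ hs' _ ht'
    _ = |s - t| := by rw [abs_sub_comm]; ring_nf
  · rw [intervalIntegral.integral_comp_sub_left (fun t => ρ (γ t)) T]
    norm_num

lemma conf_symm (hρ : ∀ p, 0 ≤ ρ p) (x y : X) :
    confDistWrt (distFun X) ρ x y = confDistWrt (distFun X) ρ y x := by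
  rcases (confSet ρ x y).eq_empty_or_nonempty with h | h
  · have h' : confSet ρ y x = ∅ := by
      rw [Set.eq_empty_iff_forall_notMem] at h ⊢
      exact fun l hl => h l (confSet_symm_subset y x hl)
    rw [confDist_eq_sInf, confDist_eq_sInf, h, h']
  · have h' : (confSet ρ y x).Nonempty := h.mono (confSet_symm_subset x y)
    rw [confDist_eq_sInf, confDist_eq_sInf]
    exact le_antisymm
      (csInf_le_csInf (confSet_bddBelow hρ) h' (confSet_symm_subset y x))
      (csInf_le_csInf (confSet_bddBelow hρ) h (confSet_symm_subset x y))

lemma conf_upper (hg : GeodesicSpaceWrt (distFun X)) (hε : 0 ≤ ε)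
    (hρpos : ∀ p, 0 < ρ p) (hρc : Continuous ρ)
    (hratio : ∀ p q : X, ρ q ≤ ρ p * Real.exp (ε * dist p q)) (x y : X) :
    confDistWrt (distFun X) ρ x y ≤ ρ x * Real.exp (ε * dist x y) * dist x y := by
  obtain ⟨γ, h0, h1, h2⟩ := geodesic_exists hg x y
  set d := dist x y with hd
  have hd0 : 0 ≤ d := dist_nonneg
  have hlip : ∀ s ∈ Icc 0 d, ∀ t ∈ Icc 0 d, dist (γ s) (γ t) ≤ |s - t| :=
    fun s hs t ht => le_of_eq (h2 s hs t ht)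
  refine le_trans (conf_le_curve x y (fun p => (hρpos p).le) hd0 hlip h0 h1) ?_
  have hcont : ContinuousOn (fun t => ρ (γ t)) (Icc 0 d) :=
    hρc.comp_continuousOn (curve_contOn hlip)
  have hptw : ∀ t ∈ Icc 0 d, ρ (γ t) ≤ ρ x * Real.exp (ε * d) := by
    intro t ht
    have h0t : dist x (γ t) = t := by
      have := h2 0 ⟨le_refl 0, hd0⟩ t ht
      rw [h0] at this
      rw [this, abs_of_nonpos (by linarith [ht.1])]; ring
    calc ρ (γ t) ≤ ρ x * Real.exp (ε * dist x (γ t)) := hratio x (γ t)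
    _ ≤ ρ x * Real.exp (ε * d) := by
        have hle : dist x (γ t) ≤ d := by rw [h0t]; exact ht.2
        have : ε * dist x (γ t) ≤ ε * d := mul_le_mul_of_nonneg_left hle hε
        gcongr
        exact (hρpos x).le
  calc (∫ t in (0:ℝ)..d, ρ (γ t)) ≤ ∫ _t in (0:ℝ)..d, ρ x * Real.exp (ε * d) := by
        apply intervalIntegral.integral_mono_on hd0
          (hcont.intervalIntegrable_of_Icc hd0) (by simp)
        exact hptw
  _ = ρ x * Real.exp (ε * d) * d := by
        rw [intervalIntegral.integral_const]; simp [smul_eq_mul]; ring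

lemma conf_lower (hg : GeodesicSpaceWrt (distFun X)) (hε : 0 ≤ ε)
    (hρpos : ∀ p, 0 < ρ p) (hρc : Continuous ρ)
    (hratio : ∀ p q : X, ρ q ≤ ρ p * Real.exp (ε * dist p q)) (x y : X) :
    Real.exp (-ε) * (ρ x * min 1 (dist x y)) ≤ confDistWrt (distFun X) ρ x y := by
  rw [confDist_eq_sInf]
  apply le_csInf (confSet_nonempty hg x y)
  rintro l ⟨T, γ, hT, hlip, h0, h1, rfl⟩
  have hdT : dist x y ≤ T := by
    have := hlip 0 ⟨le_refl 0, hT⟩ T ⟨hT, le_refl T⟩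
    rw [h0, h1, abs_of_nonpos (by linarith)] at this
    linarith
  set m := min 1 T with hm
  have hm0 : 0 ≤ m := le_min zero_le_one hT
  have hmT : m ≤ T := min_le_right _ _
  have hcont : ContinuousOn (fun t => ρ (γ t)) (Icc 0 T) :=
    hρc.comp_continuousOn (curve_contOn hlip)
  have hptw : ∀ t ∈ Icc 0 m, Real.exp (-ε) * ρ x ≤ ρ (γ t) := by
    intro t ht
    have htT : t ∈ Icc 0 T := ⟨ht.1, ht.2.trans hmT⟩
    have hdt : dist (γ t) x ≤ 1 := by
      have := hlip t htT 0 ⟨le_refl 0, hT⟩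
      rw [h0, abs_of_nonneg (by linarith [ht.1]), sub_zero] at this
      exact this.trans (ht.2.trans (min_le_left _ _))
    have h1' : ρ x ≤ ρ (γ t) * Real.exp ε := by
      calc ρ x ≤ ρ (γ t) * Real.exp (ε * dist (γ t) x) := hratio (γ t) x
      _ ≤ ρ (γ t) * Real.exp ε := by
          have : ε * dist (γ t) x ≤ ε := by
            have := mul_le_mul_of_nonneg_left hdt hε
            linarith [this]
          gcongr
          exact (hρpos _).le
    rw [Real.exp_neg, inv_mul_le_iff₀ (Real.exp_pos ε)]
    linarith [h1']
  have hIm : IntervalIntegrable (fun t => ρ (γ t)) MeasureTheory.volume 0 m :=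
    (hcont.mono (by rw [uIcc_of_le hm0]; exact Icc_subset_Icc le_rfl hmT)).intervalIntegrable
  have hImT : IntervalIntegrable (fun t => ρ (γ t)) MeasureTheory.volume m T :=
    (hcont.mono (by rw [uIcc_of_le hmT]; exact Icc_subset_Icc hm0 le_rfl)).intervalIntegrable
  have hsplit : (∫ t in (0:ℝ)..T, ρ (γ t)) =
      (∫ t in (0:ℝ)..m, ρ (γ t)) + ∫ t in m..T, ρ (γ t) :=
    (intervalIntegral.integral_add_adjacent_intervals hIm hImT).symm
  have h2nd : 0 ≤ ∫ t in m..T, ρ (γ t) :=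
    intervalIntegral.integral_nonneg hmT fun t _ => (hρpos _).le
  have hconst : Real.exp (-ε) * ρ x * m ≤ ∫ t in (0:ℝ)..m, ρ (γ t) := by
    have := intervalIntegral.integral_mono_on hm0
      (intervalIntegrable_const (c := Real.exp (-ε) * ρ x)) hIm hptw
    rwa [intervalIntegral.integral_const, sub_zero, smul_eq_mul, mul_comm] at this
  have hmin : min 1 (dist x y) ≤ m := min_le_min le_rfl hdT
  have hfin : Real.exp (-ε) * (ρ x * min 1 (dist x y)) ≤ Real.exp (-ε) * ρ x * m := by
    rw [← mul_assoc]
    gcongr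
    exact mul_nonneg (Real.exp_pos _).le (hρpos x).le
  linarith

end Aux2
section Aux3

variable {X : Type*} [MetricSpace X] {ρ : X → ℝ}

lemma conf_triangle (hg : GeodesicSpaceWrt (distFun X)) (hρpos : ∀ p, 0 < ρ p)
    (hρc : Continuous ρ) (x y z : X) :
    confDistWrt (distFun X) ρ x z ≤
      confDistWrt (distFun X) ρ x y + confDistWrt (distFun X) ρ y z := by
  apply le_of_forall_pos_le_add
  intro η hη
  obtain ⟨l1, hl1mem, hl1⟩ := exists_lt_of_csInf_lt (confSet_nonempty hg x y)
    (lt_add_of_pos_right (confDistWrt (distFun X) ρ x y) (half_pos hη))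
  obtain ⟨l2, hl2mem, hl2⟩ := exists_lt_of_csInf_lt (confSet_nonempty hg y z)
    (lt_add_of_pos_right (confDistWrt (distFun X) ρ y z) (half_pos hη))
  obtain ⟨T1, γ1, hT1, hlip1, h10, h11, rfl⟩ := hl1mem
  obtain ⟨T2, γ2, hT2, hlip2, h20, h21, rfl⟩ := hl2mem
  set γ : ℝ → X := fun t => if t ≤ T1 then γ1 t else γ2 (t - T1) with hγ
  have hT : 0 ≤ T1 + T2 := by linarith
  have hkey : ∀ s ∈ Icc 0 (T1 + T2), ∀ t ∈ Icc 0 (T1 + T2), s ≤ t →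
      dist (γ s) (γ t) ≤ t - s := by
    intro s hs t ht hst
    by_cases hs1 : s ≤ T1 <;> by_cases ht1 : t ≤ T1
    · simp only [hγ, if_pos hs1, if_pos ht1]
      have := hlip1 s ⟨hs.1, hs1⟩ t ⟨ht.1, ht1⟩
      rwa [abs_of_nonpos (by linarith), neg_sub] at this
    · simp only [hγ, if_pos hs1, if_neg ht1]
      push_neg at ht1
      have e1 := hlip1 s ⟨hs.1, hs1⟩ T1 ⟨hT1, le_refl _⟩
      rw [abs_of_nonpos (by linarith), neg_sub] at e1
      have e2 := hlip2 0 ⟨le_refl _, hT2⟩ (t - T1) ⟨by linarith, by linarith [ht.2]⟩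
      rw [abs_of_nonpos (by linarith), neg_sub, sub_zero] at e2
      calc dist (γ1 s) (γ2 (t - T1)) ≤ dist (γ1 s) (γ1 T1) + dist (γ1 T1) (γ2 (t - T1)) :=
            dist_triangle _ _ _
      _ = dist (γ1 s) (γ1 T1) + dist (γ2 0) (γ2 (t - T1)) := by rw [h11, ← h20]
      _ ≤ (T1 - s) + (t - T1) := add_le_add e1 e2
      _ = t - s := by ring
    · exact absurd (hst.trans ht1) hs1
    · simp only [hγ, if_neg hs1, if_neg ht1]
      push_neg at hs1 ht1
      have := hlip2 (s - T1) ⟨by linarith, by linarith [hs.2]⟩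
        (t - T1) ⟨by linarith, by linarith [ht.2]⟩
      rw [abs_of_nonpos (by linarith)] at this
      calc dist (γ2 (s - T1)) (γ2 (t - T1)) ≤ -(s - T1 - (t - T1)) := this
      _ = t - s := by ring
  have hlip : ∀ s ∈ Icc 0 (T1 + T2), ∀ t ∈ Icc 0 (T1 + T2), dist (γ s) (γ t) ≤ |s - t| := by
    intro s hs t ht
    rcases le_total s t with h | h
    · rw [abs_of_nonpos (by linarith), neg_sub]; exact hkey s hs t ht h
    · rw [abs_of_nonneg (by linarith), dist_comm]; exact hkey t ht s hs h
  have hγ0 : γ 0 = x := by simp only [hγ, if_pos hT1]; exact h10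
  have hγT : γ (T1 + T2) = z := by
    by_cases h : T1 + T2 ≤ T1
    · have hT2z : T2 = 0 := le_antisymm (by linarith) hT2
      simp only [hγ]
      rw [if_pos h, hT2z, add_zero, h11, ← h20, ← hT2z]
      exact h21
    · simp only [hγ, if_neg h, add_sub_cancel_left]; exact h21
  have hEq1 : EqOn (fun t => ρ (γ t)) (fun t => ρ (γ1 t)) (Icc 0 T1) := by
    intro t ht; simp only [hγ, if_pos ht.2]
  have hEq2 : EqOn (fun t => ρ (γ t)) (fun t => ρ (γ2 (t - T1))) (Icc T1 (T1 + T2)) := by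
    intro t ht
    by_cases h : t ≤ T1
    · have ht1 : t = T1 := le_antisymm h ht.1
      subst ht1
      simp only [hγ]
      rw [if_pos le_rfl, h11, sub_self, h20]
    · simp only [hγ, if_neg h]
  have hc1 : ContinuousOn (fun t => ρ (γ t)) (Icc 0 T1) :=
    (hρc.comp_continuousOn (curve_contOn hlip1)).congr hEq1
  have hc2' : ContinuousOn (fun t => ρ (γ2 (t - T1))) (Icc T1 (T1 + T2)) := by
    apply hρc.comp_continuousOn
    apply (curve_contOn hlip2).comp (continuous_sub_right T1).continuousOn
    intro t ht
    simp only [mem_Icc]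
    exact ⟨by linarith [ht.1], by linarith [ht.2]⟩
  have hc2 : ContinuousOn (fun t => ρ (γ t)) (Icc T1 (T1 + T2)) := hc2'.congr hEq2
  have hI1 : IntervalIntegrable (fun t => ρ (γ t)) MeasureTheory.volume 0 T1 :=
    (hc1.mono (by rw [uIcc_of_le hT1])).intervalIntegrable
  have hI2 : IntervalIntegrable (fun t => ρ (γ t)) MeasureTheory.volume T1 (T1 + T2) :=
    (hc2.mono (by rw [uIcc_of_le (by linarith : T1 ≤ T1 + T2)])).intervalIntegrable
  have hsum : (∫ t in (0:ℝ)..(T1 + T2), ρ (γ t)) =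
      (∫ t in (0:ℝ)..T1, ρ (γ1 t)) + ∫ t in (0:ℝ)..T2, ρ (γ2 t) := by
    rw [← intervalIntegral.integral_add_adjacent_intervals hI1 hI2]
    congr 1
    · apply intervalIntegral.integral_congr
      rw [uIcc_of_le hT1]; exact hEq1
    · rw [intervalIntegral.integral_congr (g := fun t => ρ (γ2 (t - T1)))
        (by rw [uIcc_of_le (by linarith : T1 ≤ T1 + T2)]; exact hEq2)]
      rw [intervalIntegral.integral_comp_sub_right (fun t => ρ (γ2 t)) T1]
      norm_num
  have := conf_le_curve x z (ρ := ρ) (fun p => (hρpos p).le) hT hlip hγ0 hγT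
  rw [hsum] at this
  linarith

end Aux3
section Aux4

variable {X : Type*} [MetricSpace X] {b : X → ℝ} {ε : ℝ}

lemma dens_pos (b : X → ℝ) (ε : ℝ) (p : X) : 0 < uniformizationDensity b ε p :=
  Real.exp_pos _

lemma blip_continuous (hb : ∀ p q : X, b p ≤ b q + dist p q) : Continuous b := by
  have : LipschitzWith 1 b := by
    apply LipschitzWith.of_dist_le_mul
    intro p q
    simp only [NNReal.coe_one, one_mul, Real.dist_eq, abs_sub_le_iff]
    constructor
    · linarith [hb p q]
    · linarith [hb q p, dist_comm q p]
  exact this.continuous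

lemma dens_cont (hb : ∀ p q : X, b p ≤ b q + dist p q) :
    Continuous (uniformizationDensity b ε) :=
  Real.continuous_exp.comp ((continuous_const.mul (blip_continuous hb)))

lemma dens_ratio (hε : 0 ≤ ε) (hb : ∀ p q : X, b p ≤ b q + dist p q) (p q : X) :
    uniformizationDensity b ε q ≤ uniformizationDensity b ε p * Real.exp (ε * dist p q) := by
  unfold uniformizationDensity
  rw [← Real.exp_add]
  apply Real.exp_le_exp.2
  have := mul_le_mul_of_nonneg_left (hb p q) hε
  nlinarith [this]

/-- A ray-type curve is continuous on `Ici 0`. -/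
lemma ray_contOn {g : ℝ → X} (hg : ∀ s t : ℝ, 0 ≤ s → 0 ≤ t → dist (g s) (g t) = |s - t|) :
    ContinuousOn g (Ici 0) := by
  have : LipschitzOnWith 1 g (Ici 0) := by
    apply LipschitzOnWith.of_dist_le_mul
    intro s hs t ht
    rw [hg s t hs ht, Real.dist_eq]
    simp
  exact this.continuousOn

lemma integral_exp_neg (hε : 0 < ε) (a c : ℝ) :
    (∫ t in a..c, Real.exp (-ε * t)) =
      (Real.exp (-ε * a) - Real.exp (-ε * c)) / ε := by
  have hderiv : ∀ t ∈ uIcc a c, HasDerivAt (fun u => -(ε⁻¹) * Real.exp (-ε * u))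
      (Real.exp (-ε * t)) t := by
    intro t _
    have h1 : HasDerivAt (fun u : ℝ => -ε * u) (-ε) t := by
      simpa using (hasDerivAt_id t).const_mul (-ε)
    have h2 := h1.exp
    have h3 := h2.const_mul (-(ε⁻¹))
    refine h3.congr_deriv ?_
    field_simp
  have hint : IntervalIntegrable (fun t => Real.exp (-ε * t)) MeasureTheory.volume a c :=
    (Real.continuous_exp.comp (continuous_const.mul continuous_id)).intervalIntegrable a c
  rw [intervalIntegral.integral_eq_sub_of_hasDerivAt hderiv hint]
  field_simp
  ring

lemma ray_integral_bound (hε : 0 < ε) (hb : ∀ p q : X, b p ≤ b q + dist p q)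
    {g : ℝ → X} (hg : ∀ s t : ℝ, 0 ≤ s → 0 ≤ t → dist (g s) (g t) = |s - t|)
    {c4 : ℝ}
    (hgrow : ∀ t t' : ℝ, 0 ≤ t → t ≤ t' → b (g t) + (t' - t) - c4 ≤ b (g t'))
    {a c : ℝ} (ha : 0 ≤ a) (hac : a ≤ c) :
    (∫ t in a..c, uniformizationDensity b ε (g t)) ≤
      uniformizationDensity b ε (g 0) * Real.exp (ε * c4) * Real.exp (-ε * a) / ε := by
  set K := uniformizationDensity b ε (g 0) * Real.exp (ε * c4) with hK
  have hK0 : 0 < K := mul_pos (dens_pos b ε _) (Real.exp_pos _)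
  have hptw : ∀ t ∈ Icc a c, uniformizationDensity b ε (g t) ≤ K * Real.exp (-ε * t) := by
    intro t ht
    have h0t : (0:ℝ) ≤ t := ha.trans ht.1
    have := hgrow 0 t le_rfl h0t
    unfold uniformizationDensity
    rw [hK]
    unfold uniformizationDensity
    rw [mul_assoc, ← Real.exp_add, ← Real.exp_add]
    apply Real.exp_le_exp.2
    have := mul_le_mul_of_nonneg_left this hε.le
    nlinarith [this]
  have hcont : ContinuousOn (fun t => uniformizationDensity b ε (g t)) (Icc a c) := by
    apply (dens_cont hb).comp_continuousOn
    apply (ray_contOn hg).mono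
    intro t ht; exact ha.trans ht.1
  have hint1 : IntervalIntegrable (fun t => uniformizationDensity b ε (g t))
      MeasureTheory.volume a c :=
    (hcont.mono (by rw [uIcc_of_le hac])).intervalIntegrable
  have hint2 : IntervalIntegrable (fun t => K * Real.exp (-ε * t)) MeasureTheory.volume a c :=
    (Continuous.intervalIntegrable (by fun_prop) a c)
  calc (∫ t in a..c, uniformizationDensity b ε (g t))
      ≤ ∫ t in a..c, K * Real.exp (-ε * t) :=
        intervalIntegral.integral_mono_on hac hint1 hint2 hptw
  _ = K * ((Real.exp (-ε * a) - Real.exp (-ε * c)) / ε) := by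
        rw [intervalIntegral.integral_const_mul, integral_exp_neg hε]
  _ ≤ K * (Real.exp (-ε * a) / ε) := by
        gcongr
        have := (Real.exp_pos (-ε * c)).le
        linarith
  _ = K * Real.exp (-ε * a) / ε := by ring

lemma conf_le_ray (hρpos : ∀ p : X, 0 ≤ uniformizationDensity b ε p)
    {g : ℝ → X} (hg : ∀ s t : ℝ, 0 ≤ s → 0 ≤ t → dist (g s) (g t) = |s - t|)
    {a c : ℝ} (ha : 0 ≤ a) (hac : a ≤ c) :
    confDistWrt (distFun X) (uniformizationDensity b ε) (g a) (g c) ≤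
      ∫ t in a..c, uniformizationDensity b ε (g t) := by
  have h := conf_le_curve (ρ := uniformizationDensity b ε) (g a) (g c)
    (T := c - a) (γ := fun t => g (a + t)) hρpos (by linarith)
    (fun s hs t ht => by
      rw [hg (a + s) (a + t) (by linarith [hs.1]) (by linarith [ht.1])]
      simp only [add_sub_add_left_eq_sub]
      exact le_of_eq rfl)
    (by simp) (by show g (a + (c - a)) = g c; congr 1; ring)
  rwa [intervalIntegral.integral_comp_add_left (fun t => uniformizationDensity b ε (g t)) a,
    add_zero, add_sub_cancel] at h

end Aux4
section Aux5

variable {X : Type*} [MetricSpace X]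

lemma buse_set_nonempty (σ : ℝ → X) (x : X) :
    ((fun t => distFun X (σ t) x - t) '' Ici 0).Nonempty :=
  ⟨_, 0, self_mem_Ici, rfl⟩

lemma buse_set_bddBelow {σ : ℝ → X} (hσ : IsGeodesicRayWrt (distFun X) σ) (x : X) :
    ∀ r ∈ (fun t => distFun X (σ t) x - t) '' Ici 0, -(dist (σ 0) x) ≤ r := by
  rintro r ⟨t, ht, rfl⟩
  have h1 : dist (σ 0) (σ t) = t := by
    have := hσ 0 self_mem_Ici t ht
    simp only [distFun_eq] at this
    rw [this, abs_of_nonpos (by simpa using ht)]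
    ring
  have := dist_triangle (σ 0) x (σ t)
  simp only [distFun_eq]
  have h2 := dist_comm x (σ t)
  linarith

lemma buse_le {σ : ℝ → X} (hσ : IsGeodesicRayWrt (distFun X) σ) (x : X) {t : ℝ} (ht : 0 ≤ t) :
    busemannWrt (distFun X) σ x ≤ dist (σ t) x - t :=
  csInf_le ⟨-(dist (σ 0) x), buse_set_bddBelow hσ x⟩ ⟨t, ht, rfl⟩

lemma buse_tendsto {σ : ℝ → X} (hσ : IsGeodesicRayWrt (distFun X) σ) (x : X) :
    Tendsto (fun t => dist (σ t) x - t) atTop (𝓝 (busemannWrt (distFun X) σ x)) := by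
  set B := busemannWrt (distFun X) σ x with hB
  have hanti : ∀ t t' : ℝ, 0 ≤ t → t ≤ t' → dist (σ t') x - t' ≤ dist (σ t) x - t := by
    intro t t' ht htt'
    have hd : dist (σ t') (σ t) = t' - t := by
      have := hσ t' (le_trans ht htt') t ht
      simp only [distFun_eq] at this
      rw [this, abs_of_nonneg (by linarith)]
    have := dist_triangle (σ t') x (σ t)
    have h2 := dist_triangle (σ t') (σ t) x
    have h3 := dist_comm (σ t) x
    linarith
  rw [Metric.tendsto_atTop]
  intro η hη
  obtain ⟨r, ⟨t1, ht1, rfl⟩, hr⟩ := exists_lt_of_csInf_lt (buse_set_nonempty σ x)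
    (lt_add_of_pos_right B hη)
  refine ⟨t1, fun t ht => ?_⟩
  have htnn : (0:ℝ) ≤ t := le_trans ht1 ht
  have hBle : B ≤ dist (σ t) x - t := by
    rw [hB, busemannWrt]
    exact csInf_le ⟨-(dist (σ 0) x), buse_set_bddBelow hσ x⟩ ⟨t, htnn, rfl⟩
  have hle : dist (σ t) x - t ≤ dist (σ t1) x - t1 := hanti t1 t ht1 ht
  simp only [distFun_eq] at hr
  rw [Real.dist_eq, abs_of_nonneg (by linarith)]
  linarith

lemma buse_lip {σ : ℝ → X} (hσ : IsGeodesicRayWrt (distFun X) σ) (x y : X) :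
    busemannWrt (distFun X) σ x ≤ busemannWrt (distFun X) σ y + dist x y := by
  rw [busemannWrt, busemannWrt]
  rw [← sub_le_iff_le_add]
  apply le_csInf (buse_set_nonempty σ y)
  rintro r ⟨t, ht, rfl⟩
  rw [sub_le_iff_le_add]
  have h1 : sInf ((fun t => distFun X (σ t) x - t) '' Ici 0) ≤ distFun X (σ t) x - t :=
    csInf_le ⟨-(dist (σ 0) x), buse_set_bddBelow hσ x⟩ ⟨t, ht, rfl⟩
  have h2 : dist (σ t) x ≤ dist (σ t) y + dist x y := by
    rw [dist_comm x y]; exact dist_triangle _ _ _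
  simp only [distFun_eq] at *
  linarith

end Aux5
section Aux6

variable {X : Type*} [MetricSpace X] {δ : ℝ}

/-- A geodesic segment obtained from `GeodesicSpaceWrt`. -/
lemma seg_exists (hg : GeodesicSpaceWrt (distFun X)) (x y : X) :
    ∃ γ : ℝ → X, IsGeodesicSegWrt (distFun X) γ x y := hg x y

lemma seg_dist_from_start {γ : ℝ → X} {x y : X}
    (h : IsGeodesicSegWrt (distFun X) γ x y) {s : ℝ} (hs : s ∈ Icc 0 (dist x y)) :
    dist x (γ s) = s := by
  obtain ⟨h0, h1, h2⟩ := h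
  have := h2 0 ⟨le_rfl, dist_nonneg⟩ s hs
  simp only [distFun_eq] at this h0 ⊢
  rw [← h0] at *
  rw [this, abs_of_nonpos (by linarith [hs.1])]
  ring

/-- Key hyperbolicity lemma: a point far along a ray is `2δ`-close to the negative part
of an asymptotic geodesic line. -/
lemma ray_close_to_line (hδ : 0 ≤ δ) (hg : GeodesicSpaceWrt (distFun X))
    (hhyp : DeltaHyperbolicWrt (distFun X) δ) {σ γ : ℝ → X}
    (hσ : IsGeodesicRayWrt (distFun X) σ) (hγ : IsGeodesicLineWrt (distFun X) γ)
    {c : ℝ} (hc : ∀ t, 0 ≤ t → dist (γ (-t)) (σ t) ≤ c)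
    {t : ℝ} (ht : 2 * δ + c < t) : ∃ u, 0 ≤ u ∧ dist (σ t) (γ (-u)) ≤ 2 * δ := by
  have hc0 : 0 ≤ c := le_trans dist_nonneg (hc 0 le_rfl)
  have ht0 : 0 ≤ t := by linarith
  set T : ℝ := t + c + δ + 1 with hT
  have hTpos : 0 ≤ T := by linarith
  have htT : t ≤ T := by linarith
  -- distances along the ray and the line
  have hray : ∀ s u : ℝ, 0 ≤ s → 0 ≤ u → dist (σ s) (σ u) = |s - u| := by
    intro s u hs hu; exact hσ s hs u hu
  have hAB : dist (σ 0) (σ T) = T := by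
    rw [hray 0 T le_rfl hTpos, abs_of_nonpos (by linarith)]; ring
  -- the ray is a geodesic segment from `σ 0` to `σ T`
  have hseg1 : IsGeodesicSegWrt (distFun X) σ (σ 0) (σ T) := by
    refine ⟨rfl, ?_, ?_⟩
    · simp only [distFun_eq]; rw [hAB]
    · intro s hs u hu
      simp only [distFun_eq, hAB] at hs hu ⊢
      exact hσ s hs.1 u hu.1
  obtain ⟨γ₂, hγ₂⟩ := seg_exists hg (σ T) (γ (-T))
  obtain ⟨γ₃, hγ₃⟩ := seg_exists hg (γ (-T)) (σ 0)
  obtain ⟨hthin1, -, -⟩ := hhyp (σ 0) (σ T) (γ (-T)) σ γ₂ γ₃ hseg1 hγ₂ hγ₃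
  have hpmem : σ t ∈ segImageWrt (distFun X) σ (σ 0) (σ T) := by
    refine ⟨t, ?_, rfl⟩
    simp only [distFun_eq, hAB]
    exact ⟨ht0, htT⟩
  obtain ⟨q, hq, hqd⟩ := hthin1 (σ t) hpmem
  simp only [distFun_eq] at hqd
  have hq3 : q ∈ segImageWrt (distFun X) γ₃ (γ (-T)) (σ 0) := by
    rcases hq with hq | hq
    · exfalso
      obtain ⟨s, hs, rfl⟩ := hq
      simp only [distFun_eq] at hs
      have hqB : dist (σ T) (γ₂ s) = s := seg_dist_from_start hγ₂ hs
      have hBC : dist (σ T) (γ (-T)) ≤ c := by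
        have := hc T hTpos; rwa [dist_comm] at this
      have hsc : s ≤ c := le_trans hs.2 hBC
      have h1 : dist (σ 0) (σ t) = t := by
        rw [hray 0 t le_rfl ht0, abs_of_nonpos (by linarith)]; ring
      have := dist_triangle (σ 0) (σ t) (γ₂ s)
      have h2 := dist_triangle (σ 0) (γ₂ s) (σ T)
      have h3 := dist_comm (γ₂ s) (σ T)
      -- T = dist (σ 0) (σ T) ≤ t + δ + s ≤ t + δ + c < T
      nlinarith [dist_nonneg (x := σ 0) (y := γ₂ s)]
    · exact hq
  -- second triangle: γ(-T), σ 0, γ 0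
  obtain ⟨h2seg, hh2⟩ := seg_exists hg (σ 0) (γ 0)
  have hWC : dist (γ 0) (γ (-T)) = T := by
    have := hγ 0 (-T)
    simp only [distFun_eq] at this
    rw [this, abs_of_nonneg (by linarith)]
    ring
  have hg3 : IsGeodesicSegWrt (distFun X) (fun u => γ (-u)) (γ 0) (γ (-T)) := by
    refine ⟨by show γ (-0) = γ 0; rw [neg_zero], ?_, ?_⟩
    · show γ (-(distFun X (γ 0) (γ (-T)))) = γ (-T)
      simp only [distFun_eq]
      rw [hWC]
    · intro s hs u hu
      have h := hγ (-s) (-u)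
      simp only [distFun_eq] at h ⊢
      rw [h, show (-s) - (-u) = u - s by ring, abs_sub_comm]
  obtain ⟨hthin1', -, -⟩ := hhyp (γ (-T)) (σ 0) (γ 0) γ₃ h2seg (fun u => γ (-u)) hγ₃ hh2 hg3
  obtain ⟨q', hq', hq'd⟩ := hthin1' q hq3
  simp only [distFun_eq] at hq'd
  rcases hq' with hq' | hq'
  · exfalso
    obtain ⟨s, hs, rfl⟩ := hq'
    simp only [distFun_eq] at hs
    have hq'A : dist (σ 0) (h2seg s) = s := seg_dist_from_start hh2 hs
    have hAW : dist (σ 0) (γ 0) ≤ c := by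
      have := hc 0 le_rfl
      rw [neg_zero] at this
      rwa [dist_comm] at this
    have hsc : s ≤ c := le_trans hs.2 hAW
    have h1 : dist (σ 0) (σ t) = t := by
      rw [hray 0 t le_rfl ht0, abs_of_nonpos (by linarith)]; ring
    have e1 := dist_triangle (σ 0) (h2seg s) (σ t)
    have e2 := dist_triangle (h2seg s) q (σ t)
    have e3 := dist_comm q (h2seg s)
    have e4 := dist_comm (σ t) q
    linarith
  · obtain ⟨u, hu, rfl⟩ := hq'
    simp only [distFun_eq] at hu
    refine ⟨u, hu.1, ?_⟩
    calc dist (σ t) (γ (-u)) ≤ dist (σ t) q + dist q (γ (-u)) := dist_triangle _ _ _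
    _ ≤ δ + δ := add_le_add hqd hq'd
    _ = 2 * δ := by ring

end Aux6
section Aux7

variable {X : Type*} [MetricSpace X] {δ : ℝ}

lemma buse_growth (hδ : 0 ≤ δ) (hg : GeodesicSpaceWrt (distFun X))
    (hhyp : DeltaHyperbolicWrt (distFun X) δ) {σ γ : ℝ → X}
    (hσ : IsGeodesicRayWrt (distFun X) σ) (hγ : IsGeodesicLineWrt (distFun X) γ)
    (hequiv : RayEquivWrt (distFun X) (fun t => γ (-t)) σ)
    {s s' : ℝ} (hss : s ≤ s') :
    busemannWrt (distFun X) σ (γ s) + (s' - s) - 4 * δ ≤ busemannWrt (distFun X) σ (γ s') := by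
  obtain ⟨c, hc⟩ := hequiv
  have hc' : ∀ t, 0 ≤ t → dist (γ (-t)) (σ t) ≤ c := by
    intro t ht
    have := hc t ht
    simpa using this
  have hc0 : 0 ≤ c := le_trans dist_nonneg (hc' 0 le_rfl)
  have hline : ∀ a b : ℝ, dist (γ a) (γ b) = |a - b| := by
    intro a b
    have := hγ a b
    simpa using this
  have hT := (buse_tendsto hσ (γ s')).sub (buse_tendsto hσ (γ s))
  set t0 : ℝ := 2 * δ + c + 1 + max 0 (-s) with ht0def
  have hkey : ∀ t : ℝ, t0 ≤ t →
      s' - s - 4 * δ ≤ (dist (σ t) (γ s') - t) - (dist (σ t) (γ s) - t) := by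
    intro t htt
    have htb : 2 * δ + c < t := by
      have : (0:ℝ) ≤ max 0 (-s) := le_max_left _ _
      linarith
    obtain ⟨u, hu0, hu2δ⟩ := ray_close_to_line hδ hg hhyp hσ hγ hc' htb
    have hd0 : dist (σ 0) (γ 0) ≤ c := by
      have := hc' 0 le_rfl
      rw [neg_zero] at this
      rwa [dist_comm] at this
    have hut : t - c - 2 * δ ≤ u := by
      have h1 : dist (γ 0) (γ (-u)) = u := by
        rw [hline 0 (-u), abs_of_nonneg (by linarith)]; ring_nf
      have h2 : dist (σ 0) (σ t) = t := by
        have := hσ 0 self_mem_Ici t (mem_Ici.2 (by linarith))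
        simp only [distFun_eq] at this
        rw [this, abs_of_nonpos (by linarith)]; ring
      have e1 := dist_triangle (σ 0) (γ 0) (γ (-u))
      have e2 := dist_triangle (σ 0) (γ (-u)) (σ t)
      have e4 := dist_comm (γ (-u)) (σ t)
      linarith
    have hus : -s ≤ u := by
      have : max 0 (-s) ≤ t - 2 * δ - c - 1 := by linarith
      have := le_max_right 0 (-s)
      linarith [le_max_right 0 (-s)]
    have hds' : dist (γ (-u)) (γ s') = u + s' := by
      rw [hline (-u) s', show -u - s' = -(u + s') by ring, abs_neg,
        abs_of_nonneg (by linarith)]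
    have hds : dist (γ (-u)) (γ s) = u + s := by
      rw [hline (-u) s, show -u - s = -(u + s) by ring, abs_neg,
        abs_of_nonneg (by linarith)]
    have e5 : dist (σ t) (γ s') ≥ dist (γ (-u)) (γ s') - dist (σ t) (γ (-u)) := by
      have := dist_triangle (γ (-u)) (σ t) (γ s')
      have h := dist_comm (γ (-u)) (σ t)
      linarith
    have e6 : dist (σ t) (γ s) ≤ dist (σ t) (γ (-u)) + dist (γ (-u)) (γ s) :=
      dist_triangle _ _ _
    rw [hds', hds] at *
    linarith
  have hev : ∀ᶠ t in (atTop : Filter ℝ),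
      s' - s - 4 * δ ≤ (dist (σ t) (γ s') - t) - (dist (σ t) (γ s) - t) :=
    eventually_atTop.2 ⟨t0, hkey⟩
  have := ge_of_tendsto hT hev
  linarith

end Aux7
section Aux8

variable {X : Type*} [MetricSpace X] {δ K : ℝ} {b : X → ℝ}

lemma bhat_lip (hbs : BhatStarlike (distFun X) K b) : ∀ p q : X, b p ≤ b q + dist p q := by
  intro p q
  rcases hbs with ⟨z, s0, hbf, -⟩ | ⟨σ, s0, hσ, hbf, -⟩
  · rw [hbf p, hbf q]
    simp only [distFun_eq]
    have := dist_triangle p q z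
    linarith
  · rw [hbf p, hbf q]
    have := buse_lip hσ p q
    linarith

lemma goodRay (hδ : 0 ≤ δ) (hg : GeodesicSpaceWrt (distFun X))
    (hhyp : DeltaHyperbolicWrt (distFun X) δ) (hbs : BhatStarlike (distFun X) K b) (x : X) :
    ∃ g : ℝ → X, (∀ s t : ℝ, 0 ≤ s → 0 ≤ t → dist (g s) (g t) = |s - t|) ∧
      dist x (g 0) ≤ K + 1 ∧
      ∀ t t' : ℝ, 0 ≤ t → t ≤ t' → b (g t) + (t' - t) - 4 * δ ≤ b (g t') := by
  rcases hbs with ⟨z, s0, hbf, hstar⟩ | ⟨σ, s0, hσ, hbf, hstar⟩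
  · obtain ⟨σ, hσray, hσ0, hinf⟩ := hstar x
    have hne : (distFun X x '' (σ '' Ici 0)).Nonempty :=
      ⟨_, ⟨σ 0, ⟨0, self_mem_Ici, rfl⟩, rfl⟩⟩
    obtain ⟨r, ⟨w, ⟨t0, ht0, rfl⟩, rfl⟩, hr⟩ :=
      exists_lt_of_csInf_lt hne (lt_of_le_of_lt hinf (lt_add_one K))
    refine ⟨fun t => σ (t0 + t), ?_, ?_, ?_⟩
    · intro s t hs ht
      have := hσray (t0 + s) (mem_Ici.2 (by linarith [mem_Ici.1 ht0]))
        (t0 + t) (mem_Ici.2 (by linarith [mem_Ici.1 ht0]))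
      simp only [distFun_eq] at this
      rw [this, add_sub_add_left_eq_sub]
    · simp only [add_zero]
      exact le_of_lt hr
    · intro t t' ht htt'
      have hdz : ∀ u : ℝ, 0 ≤ u → dist (σ u) z = u := by
        intro u hu
        have := hσray u (mem_Ici.2 hu) 0 self_mem_Ici
        simp only [distFun_eq, hσ0] at this
        rw [this, abs_of_nonneg (by linarith)]
        ring
      have h0 : (0:ℝ) ≤ t0 := mem_Ici.1 ht0
      rw [hbf, hbf]
      simp only [distFun_eq]
      rw [hdz (t0 + t) (by linarith), hdz (t0 + t') (by linarith)]
      linarith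
  · obtain ⟨γ, hγline, hequiv, hinf⟩ := hstar x
    have hne : (distFun X x '' range γ).Nonempty := ⟨_, ⟨γ 0, ⟨0, rfl⟩, rfl⟩⟩
    obtain ⟨r, ⟨w, ⟨t0, rfl⟩, rfl⟩, hr⟩ :=
      exists_lt_of_csInf_lt hne (lt_of_le_of_lt hinf (lt_add_one K))
    refine ⟨fun t => γ (t0 + t), ?_, ?_, ?_⟩
    · intro s t hs ht
      have := hγline (t0 + s) (t0 + t)
      simp only [distFun_eq] at this
      rw [this, add_sub_add_left_eq_sub]
    · simp only [add_zero]
      exact le_of_lt hr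
    · intro t t' ht htt'
      have := buse_growth hδ hg hhyp hσ hγline hequiv
        (s := t0 + t) (s' := t0 + t') (by linarith)
      rw [hbf, hbf]
      have heq : t0 + t' - (t0 + t) = t' - t := by ring
      rw [heq] at this
      linarith

end Aux8
section Aux9

variable {X : Type*} [MetricSpace X] {b : X → ℝ} {ε : ℝ}

/-- The set whose infimum is the boundary distance. -/
lemma bdry_eq_sInf (e : X → X → ℝ) (x : X) :
    bdryDistWrt e x = sInf { r : ℝ | ∃ u : ℕ → X, CauchyWrt e u ∧ ¬ ConvWrt e u ∧
      Tendsto (fun n => e x (u n)) atTop (𝓝 r) } := rfl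

lemma bdrySet_nonneg (hg : GeodesicSpaceWrt (distFun X)) (hρpos : ∀ p : X, 0 ≤ ρ p) (x : X) :
    ∀ r ∈ { r : ℝ | ∃ u : ℕ → X, CauchyWrt (confDistWrt (distFun X) ρ) u ∧
      ¬ ConvWrt (confDistWrt (distFun X) ρ) u ∧
      Tendsto (fun n => confDistWrt (distFun X) ρ x (u n)) atTop (𝓝 r) }, (0:ℝ) ≤ r := by
  rintro r ⟨u, -, -, hlim⟩
  exact ge_of_tendsto hlim (Eventually.of_forall fun n => conf_nonneg hρpos x (u n))

variable [ProperSpace X]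

lemma D_lower (hg : GeodesicSpaceWrt (distFun X)) (hε : 0 < ε)
    (hb : ∀ p q : X, b p ≤ b q + dist p q) (x : X)
    (hne : { r : ℝ | ∃ u : ℕ → X,
      CauchyWrt (confDistWrt (distFun X) (uniformizationDensity b ε)) u ∧
      ¬ ConvWrt (confDistWrt (distFun X) (uniformizationDensity b ε)) u ∧
      Tendsto (fun n => confDistWrt (distFun X) (uniformizationDensity b ε) x (u n))
        atTop (𝓝 r) }.Nonempty) :
    Real.exp (-ε) * uniformizationDensity b ε x ≤
      bdryDistWrt (confDistWrt (distFun X) (uniformizationDensity b ε)) x := by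
  set ρ := uniformizationDensity b ε with hρdef
  have hρpos : ∀ p : X, 0 < ρ p := dens_pos b ε
  have hρc : Continuous ρ := dens_cont hb
  have hratio := dens_ratio hε.le hb (b := b) (ε := ε)
  set E := confDistWrt (distFun X) ρ with hEdef
  rw [bdry_eq_sInf]
  apply le_csInf hne
  rintro r ⟨u, hcau, hnconv, hlim⟩
  have hev : ∀ᶠ n in (atTop : Filter ℕ), 1 ≤ dist x (u n) := by
    by_contra hcon
    rw [Filter.not_eventually] at hcon
    have hfreq : ∃ᶠ n in (atTop : Filter ℕ), dist x (u n) ≤ 1 :=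
      hcon.mono fun n hn => le_of_not_ge hn
    obtain ⟨φ, hφmono, hφ⟩ := Filter.extraction_of_frequently_atTop hfreq
    have hmem : ∀ n, u (φ n) ∈ closedBall x 1 := by
      intro n
      rw [mem_closedBall, dist_comm]
      exact hφ n
    obtain ⟨y, -, ψ, hψmono, hψtend⟩ :=
      (isCompact_closedBall x 1).tendsto_subseq hmem
    have hd : Tendsto (fun k => dist y (u (φ (ψ k)))) atTop (𝓝 0) := by
      have := tendsto_iff_dist_tendsto_zero.1 hψtend
      simpa [Function.comp, dist_comm] using this
    have htend0 : Tendsto (fun k => E y (u (φ (ψ k)))) atTop (𝓝 0) := by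
      apply squeeze_zero (fun k => conf_nonneg (fun p => (hρpos p).le) _ _)
        (fun k => conf_upper hg hε.le hρpos hρc hratio y _)
      have h1 : Tendsto (fun k => ε * dist y (u (φ (ψ k)))) atTop (𝓝 0) := by
        simpa using hd.const_mul ε
      have h2 : Tendsto (fun k => Real.exp (ε * dist y (u (φ (ψ k))))) atTop (𝓝 1) := by
        simpa [Function.comp_def] using (Real.continuous_exp.tendsto 0).comp h1
      have h3 := (tendsto_const_nhds (x := ρ y)).mul h2
      have h4 := h3.mul hd
      simpa using h4
    apply hnconv
    refine ⟨y, ?_⟩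
    rw [Metric.tendsto_atTop]
    intro η hη
    obtain ⟨N, hN⟩ := hcau (η / 2) (half_pos hη)
    rw [Metric.tendsto_atTop] at htend0
    obtain ⟨k0, hk0⟩ := htend0 (η / 2) (half_pos hη)
    set m := φ (ψ (max k0 N)) with hm
    have hmN : N ≤ m := le_trans (le_max_right k0 N)
      (le_trans (hψmono.le_apply) (hφmono.le_apply))
    have hEym : E y (u m) < η / 2 := by
      have := hk0 (max k0 N) (le_max_left _ _)
      rw [Real.dist_eq, sub_zero, abs_of_nonneg (conf_nonneg (fun p => (hρpos p).le) _ _)] at this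
      exact this
    refine ⟨N, fun n hn => ?_⟩
    rw [Real.dist_eq, sub_zero,
      abs_of_nonneg (conf_nonneg (fun p => (hρpos p).le) _ _)]
    calc E (u n) y ≤ E (u n) (u m) + E (u m) y :=
          conf_triangle hg hρpos hρc _ _ _
    _ = E (u n) (u m) + E y (u m) := by
          rw [show E (u m) y = E y (u m) from conf_symm (fun p => (hρpos p).le) (u m) y]
    _ < η / 2 + η / 2 := add_lt_add (hN n hn m hmN) hEym
    _ = η := by ring
  have hlb : ∀ᶠ n in (atTop : Filter ℕ), Real.exp (-ε) * ρ x ≤ E x (u n) := by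
    filter_upwards [hev] with n hn
    have := conf_lower hg hε.le hρpos hρc hratio x (u n)
    rw [min_eq_left hn, mul_one] at this
    exact this
  exact ge_of_tendsto hlim hlb

end Aux9
section Aux10

variable {X : Type*} [MetricSpace X] {b : X → ℝ} {ε δ K : ℝ}

lemma D_upper (hg : GeodesicSpaceWrt (distFun X)) (hε : 0 < ε) (hδ : 0 ≤ δ) (hK : 0 ≤ K)
    (hb : ∀ p q : X, b p ≤ b q + dist p q) (x : X) {g : ℝ → X}
    (hgiso : ∀ s t : ℝ, 0 ≤ s → 0 ≤ t → dist (g s) (g t) = |s - t|)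
    (hd0 : dist x (g 0) ≤ K + 1)
    (hgrow : ∀ t t' : ℝ, 0 ≤ t → t ≤ t' → b (g t) + (t' - t) - 4 * δ ≤ b (g t')) :
    bdryDistWrt (confDistWrt (distFun X) (uniformizationDensity b ε)) x ≤
      ((K + 1) * Real.exp (ε * (K + 1)) +
        Real.exp (ε * (K + 1)) * Real.exp (ε * (4 * δ)) / ε) *
        uniformizationDensity b ε x := by
  set ρ := uniformizationDensity b ε with hρdef
  have hρpos : ∀ p : X, 0 < ρ p := dens_pos b ε
  have hρc : Continuous ρ := dens_cont hb
  have hratio := dens_ratio hε.le hb (b := b) (ε := ε)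
  set E := confDistWrt (distFun X) ρ with hEdef
  set u : ℕ → X := fun n => g n with hudef
  -- distance along the ray
  have hdistg : ∀ m n : ℕ, m ≤ n → dist (g m) (g n) = (n : ℝ) - m := by
    intro m n hmn
    rw [hgiso m n (Nat.cast_nonneg m) (Nat.cast_nonneg n),
      abs_of_nonpos (by simp [Nat.cast_le, hmn] : (m:ℝ) - n ≤ 0)]
    ring
  -- the basic conformal length bound along the ray
  have hEgab : ∀ a c : ℝ, 0 ≤ a → a ≤ c →
      E (g a) (g c) ≤ ρ (g 0) * Real.exp (ε * (4 * δ)) * Real.exp (-ε * a) / ε := by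
    intro a c ha hac
    refine le_trans (conf_le_ray (fun p => (hρpos p).le) hgiso ha hac) ?_
    exact ray_integral_bound hε hb hgiso hgrow ha hac
  set Q : ℝ := ρ (g 0) * Real.exp (ε * (4 * δ)) / ε with hQdef
  have hQpos : 0 < Q :=
    div_pos (mul_pos (hρpos _) (Real.exp_pos _)) hε
  have hEQ : ∀ m n : ℕ, m ≤ n → E (u m) (u n) ≤ Q * Real.exp (-ε * m) := by
    intro m n hmn
    have := hEgab m n (Nat.cast_nonneg m) (by exact_mod_cast hmn)
    calc E (u m) (u n) ≤ ρ (g 0) * Real.exp (ε * (4 * δ)) * Real.exp (-ε * m) / ε := this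
    _ = Q * Real.exp (-ε * m) := by rw [hQdef]; ring
  have hexp_tend : Tendsto (fun n : ℕ => Q * Real.exp (-ε * n)) atTop (𝓝 0) := by
    have h1 : Tendsto (fun n : ℕ => Real.exp (-ε * n)) atTop (𝓝 0) := by
      have heq : (fun n : ℕ => Real.exp (-ε * n)) = fun n : ℕ => Real.exp (-ε) ^ n := by
        funext n
        rw [← Real.exp_nat_mul]
        congr 1
        ring
      rw [heq]
      exact tendsto_pow_atTop_nhds_zero_of_lt_one (Real.exp_pos _).le
        (Real.exp_lt_one_iff.2 (by linarith))
    simpa using (tendsto_const_nhds (x := Q)).mul h1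
  have hcau : CauchyWrt E u := by
    intro η hη
    rw [Metric.tendsto_atTop] at hexp_tend
    obtain ⟨N, hN⟩ := hexp_tend η hη
    have hQN : Q * Real.exp (-ε * N) < η := by
      have := hN N le_rfl
      rwa [Real.dist_eq, sub_zero,
        abs_of_nonneg (mul_nonneg hQpos.le (Real.exp_pos _).le)] at this
    refine ⟨N, fun m hm n hn => ?_⟩
    have key : ∀ p q : ℕ, N ≤ p → p ≤ q → E (u p) (u q) < η := by
      intro p q hp hpq
      have hNe : Real.exp (-ε * p) ≤ Real.exp (-ε * N) := by
        apply Real.exp_le_exp.2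
        have hNp : (N:ℝ) ≤ p := by exact_mod_cast hp
        nlinarith
      calc E (u p) (u q) ≤ Q * Real.exp (-ε * p) := hEQ p q hpq
      _ ≤ Q * Real.exp (-ε * N) := mul_le_mul_of_nonneg_left hNe hQpos.le
      _ < η := hQN
    rcases le_total m n with h | h
    · exact key m n hm h
    · have hkey := key n m hn h
      rwa [show E (u n) (u m) = E (u m) (u n) from
        conf_symm (fun p => (hρpos p).le) (u n) (u m)] at hkey
  have hnconv : ¬ ConvWrt E u := by
    rintro ⟨y, hy⟩
    have hfar : ∀ᶠ n in (atTop : Filter ℕ), 1 ≤ dist y (u n) := by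
      rw [eventually_atTop]
      refine ⟨⌈K + 2 + dist x y⌉₊, fun n hn => ?_⟩
      have hcast : K + 2 + dist x y ≤ (n : ℝ) :=
        le_trans (Nat.le_ceil _) (by exact_mod_cast hn)
      have h1 : dist (g 0) (g n) = (n : ℝ) := by
        have := hdistg 0 n (Nat.zero_le n)
        simpa using this
      have e1 := dist_triangle (g 0) x y
      have e2 := dist_triangle (g 0) y (g n)
      have e3 := dist_comm x (g 0)
      have e4 := dist_comm y (g n)
      linarith
    have hlb : ∀ᶠ n in (atTop : Filter ℕ), Real.exp (-ε) * ρ y ≤ E (u n) y := by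
      filter_upwards [hfar] with n hn
      have := conf_lower hg hε.le hρpos hρc hratio y (u n)
      rw [min_eq_left hn, mul_one] at this
      rw [show E (u n) y = E y (u n) from conf_symm (fun p => (hρpos p).le) (u n) y]
      exact this
    have h0 : Real.exp (-ε) * ρ y ≤ 0 := ge_of_tendsto hy hlb
    nlinarith [Real.exp_pos (-ε), hρpos y]
  have hCS : CauchySeq (fun n => E x (u n)) := by
    rw [Metric.cauchySeq_iff]
    intro η hη
    obtain ⟨N, hN⟩ := hcau η hη
    refine ⟨N, fun m hm n hn => ?_⟩
    rw [Real.dist_eq, abs_sub_lt_iff]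
    have t1 : E x (u m) ≤ E x (u n) + E (u n) (u m) := conf_triangle hg hρpos hρc _ _ _
    have t2 : E x (u n) ≤ E x (u m) + E (u m) (u n) := conf_triangle hg hρpos hρc _ _ _
    have h1 := hN n hn m hm
    have h2 := hN m hm n hn
    constructor <;> linarith
  obtain ⟨r, hr⟩ := cauchySeq_tendsto_of_complete hCS
  have hmem : r ∈ { r : ℝ | ∃ u : ℕ → X, CauchyWrt E u ∧ ¬ ConvWrt E u ∧
      Tendsto (fun n => E x (u n)) atTop (𝓝 r) } := ⟨u, hcau, hnconv, hr⟩
  have hDler : bdryDistWrt E x ≤ r := by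
    apply csInf_le ⟨0, ?_⟩ hmem
    exact fun s hs => bdrySet_nonneg hg (fun p => (hρpos p).le) x s hs
  have hrle : r ≤ ((K + 1) * Real.exp (ε * (K + 1)) +
      Real.exp (ε * (K + 1)) * Real.exp (ε * (4 * δ)) / ε) * ρ x := by
    apply le_of_tendsto hr
    apply Eventually.of_forall
    intro n
    have t1 : E x (u n) ≤ E x (g 0) + E (g 0) (u n) := conf_triangle hg hρpos hρc _ _ _
    have t2 : E x (g 0) ≤ ρ x * Real.exp (ε * (K + 1)) * (K + 1) := by
      refine le_trans (conf_upper hg hε.le hρpos hρc hratio x (g 0)) ?_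
      have hd0' : (0:ℝ) ≤ dist x (g 0) := dist_nonneg
      have hexp : Real.exp (ε * dist x (g 0)) ≤ Real.exp (ε * (K + 1)) :=
        Real.exp_le_exp.2 (mul_le_mul_of_nonneg_left hd0 hε.le)
      apply mul_le_mul
      · exact mul_le_mul_of_nonneg_left hexp (hρpos x).le
      · exact hd0
      · exact hd0'
      · exact mul_nonneg (hρpos x).le (Real.exp_pos _).le
    have t3 : E (g 0) (u n) ≤ Q := by
      have h := hEQ 0 n (Nat.zero_le n)
      have h0 : u 0 = g 0 := by rw [hudef]; norm_num
      rw [h0] at h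
      simpa using h
    have t4 : Q ≤ ρ x * Real.exp (ε * (K + 1)) * Real.exp (ε * (4 * δ)) / ε := by
      have hg0 : ρ (g 0) ≤ ρ x * Real.exp (ε * (K + 1)) := by
        refine le_trans (hratio x (g 0)) ?_
        exact mul_le_mul_of_nonneg_left
          (Real.exp_le_exp.2 (mul_le_mul_of_nonneg_left hd0 hε.le)) (hρpos x).le
      rw [hQdef, div_le_div_iff₀ hε hε]
      exact mul_le_mul_of_nonneg_right
        (mul_le_mul_of_nonneg_right hg0 (Real.exp_pos _).le) hε.le
    have hring : ρ x * Real.exp (ε * (K + 1)) * (K + 1) +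
        ρ x * Real.exp (ε * (K + 1)) * Real.exp (ε * (4 * δ)) / ε =
        ((K + 1) * Real.exp (ε * (K + 1)) +
          Real.exp (ε * (K + 1)) * Real.exp (ε * (4 * δ)) / ε) * ρ x := by ring
    linarith
  linarith

end Aux10

set_option maxHeartbeats 1000000

/-- (Sub-Whitney balls.) There is `0 < λ < 1` depending only on
`δ, K, ε, M` such that for all `y, z` in the ball of radius `λ·d_{ε,b}(x)` around `x` in
the metric `d_{ε,b}`, one has `d(y,z) ≤ 1` and `d_{ε,b}(y,z) ≍_C d_{ε,b}(x)·d(y,z)` with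
`C = C(δ,K,ε,M)`. -/
theorem statement19 (δ K ε M : ℝ) (hδ : 0 ≤ δ) (hK : 0 ≤ K) (hε : 0 < ε) (hM : 1 ≤ M) :
    ∃ lam C : ℝ, 0 < lam ∧ lam < 1 ∧ 1 ≤ C ∧
      ∀ (X : Type*) [MetricSpace X] [ProperSpace X],
        GeodesicSpaceWrt (distFun X) → DeltaHyperbolicWrt (distFun X) δ →
        ∀ b : X → ℝ, BhatStarlike (distFun X) K b →
          IsGHDensityWrt (distFun X) M (uniformizationDensity b ε) →
          ∀ x y z : X,
            confDistWrt (distFun X) (uniformizationDensity b ε) x y <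
              lam * bdryDistWrt (confDistWrt (distFun X) (uniformizationDensity b ε)) x →
            confDistWrt (distFun X) (uniformizationDensity b ε) x z <
              lam * bdryDistWrt (confDistWrt (distFun X) (uniformizationDensity b ε)) x →
            dist y z ≤ 1 ∧
            C⁻¹ * (bdryDistWrt (confDistWrt (distFun X) (uniformizationDensity b ε)) x *
                dist y z) ≤
              confDistWrt (distFun X) (uniformizationDensity b ε) y z ∧
            confDistWrt (distFun X) (uniformizationDensity b ε) y z ≤
              C * (bdryDistWrt (confDistWrt (distFun X) (uniformizationDensity b ε)) x *
                dist y z) := by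
  set A : ℝ := (K + 1) * Real.exp (ε * (K + 1)) +
    Real.exp (ε * (K + 1)) * Real.exp (ε * (4 * δ)) / ε with hAdef
  have hA1 : 1 ≤ A := by
    have h1 : (1:ℝ) ≤ K + 1 := by linarith
    have h2 : (1:ℝ) ≤ Real.exp (ε * (K + 1)) :=
      Real.one_le_exp (by positivity)
    have h3 : (0:ℝ) ≤ Real.exp (ε * (K + 1)) * Real.exp (ε * (4 * δ)) / ε := by positivity
    have h4 : (1:ℝ) ≤ (K + 1) * Real.exp (ε * (K + 1)) := by nlinarith
    rw [hAdef]
    linarith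
  have hApos : 0 < A := lt_of_lt_of_le one_pos hA1
  refine ⟨min (1/2) (Real.exp (-ε) / (4 * A)), A * Real.exp (3 * ε), ?_, ?_, ?_, ?_⟩
  · exact lt_min (by norm_num) (div_pos (Real.exp_pos _) (by linarith))
  · exact lt_of_le_of_lt (min_le_left _ _) (by norm_num)
  · have := Real.one_le_exp (by positivity : (0:ℝ) ≤ 3 * ε)
    nlinarith
  · intro X _ _ hgeo hhyp b hbs _ x y z hy hz
    set lam : ℝ := min (1/2) (Real.exp (-ε) / (4 * A)) with hlamdef
    have hlampos : 0 < lam :=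
      lt_min (by norm_num) (div_pos (Real.exp_pos _) (by linarith))
    set ρ := uniformizationDensity b ε with hρdef
    set E := confDistWrt (distFun X) ρ with hEdef
    set Dx := bdryDistWrt E x with hDxdef
    have hb : ∀ p q : X, b p ≤ b q + dist p q := bhat_lip hbs
    have hρpos : ∀ p : X, 0 < ρ p := dens_pos b ε
    have hρc : Continuous ρ := dens_cont hb
    have hratio := dens_ratio hε.le hb (b := b) (ε := ε)
    have h0y : 0 ≤ E x y := conf_nonneg (fun p => (hρpos p).le) x y
    have hDxpos : 0 < Dx := by
      by_contra hcon
      push_neg at hcon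
      have : lam * Dx ≤ 0 := mul_nonpos_of_nonneg_of_nonpos hlampos.le hcon
      linarith
    have hne : { r : ℝ | ∃ u : ℕ → X, CauchyWrt E u ∧ ¬ ConvWrt E u ∧
        Tendsto (fun n => E x (u n)) atTop (𝓝 r) }.Nonempty := by
      by_contra hcon
      rw [Set.not_nonempty_iff_eq_empty] at hcon
      have : Dx = 0 := by
        rw [hDxdef, bdry_eq_sInf, hcon, Real.sInf_empty]
      linarith
    have hDlow : Real.exp (-ε) * ρ x ≤ Dx := D_lower hgeo hε hb x hne
    have hDup : Dx ≤ A * ρ x := by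
      obtain ⟨g, hgiso, hd0, hgrow⟩ := goodRay hδ hgeo hhyp hbs x
      exact D_upper hgeo hε hδ hK hb x hgiso hd0 hgrow
    -- the points y and z are d-close to x
    have hsmall : ∀ w : X, E x w < lam * Dx → dist x w ≤ 1/4 := by
      intro w hw
      have h1 : Real.exp (-ε) * (ρ x * min 1 (dist x w)) ≤ E x w :=
        conf_lower hgeo hε.le hρpos hρc hratio x w
      have h2 : lam * Dx ≤ lam * (A * ρ x) :=
        mul_le_mul_of_nonneg_left hDup hlampos.le
      have h3 : lam ≤ Real.exp (-ε) / (4 * A) := min_le_right _ _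
      have h4 : lam * (A * ρ x) ≤ (Real.exp (-ε) / (4 * A)) * (A * ρ x) :=
        mul_le_mul_of_nonneg_right h3 (mul_nonneg hApos.le (hρpos x).le)
      have h5 : (Real.exp (-ε) / (4 * A)) * (A * ρ x) = Real.exp (-ε) * ρ x / 4 := by
        have hAne : A ≠ 0 := ne_of_gt hApos
        field_simp
      have h6 : Real.exp (-ε) * (ρ x * min 1 (dist x w)) < Real.exp (-ε) * ρ x / 4 := by
        calc Real.exp (-ε) * (ρ x * min 1 (dist x w)) ≤ E x w := h1
        _ < lam * Dx := hw
        _ ≤ lam * (A * ρ x) := h2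
        _ ≤ (Real.exp (-ε) / (4 * A)) * (A * ρ x) := h4
        _ = Real.exp (-ε) * ρ x / 4 := h5
      have hmin : min 1 (dist x w) < 1/4 := by
        by_contra hcon
        push_neg at hcon
        have hexp := Real.exp_pos (-ε)
        nlinarith [hρpos x, mul_le_mul_of_nonneg_left hcon
          (mul_pos hexp (hρpos x)).le]
      rcases le_total 1 (dist x w) with h | h
      · rw [min_eq_left h] at hmin; norm_num at hmin
      · rw [min_eq_right h] at hmin; linarith
    have hdxy : dist x y ≤ 1/4 := hsmall y hy
    have hdxz : dist x z ≤ 1/4 := hsmall z hz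
    have hdyz : dist y z ≤ 1/2 := by
      have := dist_triangle y x z
      have h := dist_comm y x
      linarith
    refine ⟨by linarith, ?_, ?_⟩
    -- relations between densities at x and y
    · -- lower bound
      have hmin : min 1 (dist y z) = dist y z := min_eq_right (by linarith)
      have h5 : Real.exp (-ε) * (ρ y * dist y z) ≤ E y z := by
        have := conf_lower hgeo hε.le hρpos hρc hratio y z
        rwa [hmin] at this
      have hPR : ρ x ≤ ρ y * Real.exp ε := by
        have := hratio y x
        have hexp : Real.exp (ε * dist y x) ≤ Real.exp ε := by
          apply Real.exp_le_exp.2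
          have hd := dist_comm y x
          nlinarith
        calc ρ x ≤ ρ y * Real.exp (ε * dist y x) := this
        _ ≤ ρ y * Real.exp ε := mul_le_mul_of_nonneg_left hexp (hρpos y).le
      have hCinv : (A * Real.exp (3 * ε))⁻¹ * (Dx * dist y z) ≤
          Real.exp (-ε) * (ρ y * dist y z) := by
        have hd0 : (0:ℝ) ≤ dist y z := dist_nonneg
        have e3 : (0:ℝ) < Real.exp (3 * ε) := Real.exp_pos _
        have step1 : (A * Real.exp (3 * ε))⁻¹ * (Dx * dist y z) ≤
            (A * Real.exp (3 * ε))⁻¹ * (A * ρ x * dist y z) := by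
          apply mul_le_mul_of_nonneg_left _
            (inv_nonneg.2 (mul_nonneg hApos.le e3.le))
          exact mul_le_mul_of_nonneg_right hDup hd0
        have step2 : (A * Real.exp (3 * ε))⁻¹ * (A * ρ x * dist y z) =
            (Real.exp (3 * ε))⁻¹ * (ρ x * dist y z) := by
          have hAne : A ≠ 0 := ne_of_gt hApos
          have hene : Real.exp (3 * ε) ≠ 0 := ne_of_gt e3
          field_simp
        have step3 : (Real.exp (3 * ε))⁻¹ * (ρ x * dist y z) ≤
            (Real.exp (3 * ε))⁻¹ * ((ρ y * Real.exp ε) * dist y z) := by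
          apply mul_le_mul_of_nonneg_left _ (by positivity)
          exact mul_le_mul_of_nonneg_right hPR hd0
        have hee : Real.exp (-(3 * ε)) * Real.exp ε = Real.exp (-(2 * ε)) := by
          rw [← Real.exp_add]
          ring_nf
        have step4 : (Real.exp (3 * ε))⁻¹ * ((ρ y * Real.exp ε) * dist y z) =
            Real.exp (-(2*ε)) * (ρ y * dist y z) := by
          rw [← Real.exp_neg, ← hee]
          ring
        have step5 : Real.exp (-(2*ε)) * (ρ y * dist y z) ≤
            Real.exp (-ε) * (ρ y * dist y z) := by
          apply mul_le_mul_of_nonneg_right _ (mul_nonneg (hρpos y).le hd0)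
          exact Real.exp_le_exp.2 (by linarith)
        calc (A * Real.exp (3 * ε))⁻¹ * (Dx * dist y z) ≤ _ := step1
        _ = _ := step2
        _ ≤ _ := step3
        _ = _ := step4
        _ ≤ _ := step5
      exact hCinv.trans h5
    · -- upper bound
      have hup : E y z ≤ ρ y * Real.exp (ε * dist y z) * dist y z :=
        conf_upper hgeo hε.le hρpos hρc hratio y z
      have hd0 : (0:ℝ) ≤ dist y z := dist_nonneg
      have hRP : ρ y ≤ ρ x * Real.exp ε := by
        have := hratio x y
        have hexp : Real.exp (ε * dist x y) ≤ Real.exp ε := by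
          apply Real.exp_le_exp.2
          nlinarith
        calc ρ y ≤ ρ x * Real.exp (ε * dist x y) := this
        _ ≤ ρ x * Real.exp ε := mul_le_mul_of_nonneg_left hexp (hρpos x).le
      have hexpd : Real.exp (ε * dist y z) ≤ Real.exp ε :=
        Real.exp_le_exp.2 (by nlinarith)
      have hPD : ρ x ≤ Real.exp ε * Dx := by
        have h := mul_le_mul_of_nonneg_left hDlow (Real.exp_pos ε).le
        rw [← mul_assoc, ← Real.exp_add] at h
        simpa using h
      have key : E y z ≤ Real.exp (3 * ε) * (Dx * dist y z) := by
        calc E y z ≤ ρ y * Real.exp (ε * dist y z) * dist y z := hup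
        _ ≤ (ρ x * Real.exp ε) * Real.exp ε * dist y z := by
            apply mul_le_mul_of_nonneg_right _ hd0
            apply mul_le_mul hRP hexpd (Real.exp_pos _).le
            exact mul_nonneg (hρpos x).le (Real.exp_pos _).le
        _ ≤ ((Real.exp ε * Dx) * Real.exp ε) * Real.exp ε * dist y z := by
            apply mul_le_mul_of_nonneg_right _ hd0
            apply mul_le_mul_of_nonneg_right _ (Real.exp_pos ε).le
            exact mul_le_mul_of_nonneg_right hPD (Real.exp_pos ε).le
        _ = Real.exp (3 * ε) * (Dx * dist y z) := by
            rw [show Real.exp (3 * ε) = Real.exp ε * Real.exp ε * Real.exp ε by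
              rw [← Real.exp_add, ← Real.exp_add]; ring_nf]
            ring
      have hfin : Real.exp (3 * ε) * (Dx * dist y z) ≤
          A * Real.exp (3 * ε) * (Dx * dist y z) := by
        have h1 : Real.exp (3 * ε) ≤ A * Real.exp (3 * ε) := by
          have h2 := mul_le_mul_of_nonneg_right hA1 (Real.exp_pos (3 * ε)).le
          rwa [one_mul] at h2
        exact mul_le_mul_of_nonneg_right h1 (mul_nonneg hDxpos.le hd0)
      exact key.trans hfin


end Paper

end
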